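/- A ring R is von Neumann regular if and only if every left R-module is absolutely self pure. -/

import Mathlib

universe u v w

/-- The annihilator of an element `a` of a left `R`-module, as a left ideal of `R`. -/
def annihilatorOf (R : Type u) [Ring R] {A : Type v} [AddCommGroup A] [Module R A] (a : A) :
    Submodule R R := LinearMap.ker (LinearMap.toSpanSingleton R A a)

/-- `J` belongs to the filter `Ω̄(A)` of left ideals generated by annihilators of elements of
`A`, i.e. `J` contains a finite intersection of annihilators of elements of `A`. -/
def MemOmegaBar (R : Type u) [Ring R] (A : Type v) [AddCommGroup A] [Module R A]
    (J : Submodule R R) : Prop :=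
  ∃ s : Finset A, (⨅ a ∈ s, annihilatorOf R a) ≤ J

/-- `A` is a self pure submodule of `B` (along the injection `i`): every map `f : L → A` from a
finitely generated left ideal with `ker f ∈ Ω̄(A)` which extends to a map `R → B` also extends
to a map `R → A`. -/
def IsSelfPureIn (R : Type u) [Ring R] {A : Type v} {B : Type w} [AddCommGroup A] [Module R A]
    [AddCommGroup B] [Module R B] (i : A →ₗ[R] B) : Prop :=
  ∀ L : Submodule R R, L.FG → ∀ f : L →ₗ[R] A,
    MemOmegaBar R A ((LinearMap.ker f).map L.subtype) →
    (∃ g : R →ₗ[R] B, ∀ x : L, g x = i (f x)) →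
    ∃ h : R →ₗ[R] A, ∀ x : L, h x = f x

/-- `A` is absolutely self pure: every map `f : L → A` from a finitely generated left ideal of
`R` with `ker f ∈ Ω̄(A)` extends to a map `R → A`. -/
def AbsolutelySelfPure (R : Type u) [Ring R] (A : Type v) [AddCommGroup A] [Module R A] : Prop :=
  ∀ L : Submodule R R, L.FG → ∀ f : L →ₗ[R] A,
    MemOmegaBar R A ((LinearMap.ker f).map L.subtype) →
    ∃ h : R →ₗ[R] A, ∀ x : L, h x = f x

/-- `Q` is quasi injective: every homomorphism from a submodule of `Q` into `Q` extends to an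
endomorphism of `Q`. -/
def IsQuasiInjective (R : Type u) [Ring R] (Q : Type v) [AddCommGroup Q] [Module R Q] : Prop :=
  ∀ (N : Submodule R Q) (f : N →ₗ[R] Q), ∃ g : Q →ₗ[R] Q, ∀ x : N, g x = f x

/-- `A` is a pure submodule of `B` (along `i`): for every finitely generated submodule `K` of a
finite free module and every commuting square, a map `F → A` makes the upper triangle commute. -/
def IsPureIn (R : Type u) [Ring R] {A : Type v} {B : Type w} [AddCommGroup A] [Module R A]
    [AddCommGroup B] [Module R B] (i : A →ₗ[R] B) : Prop :=
  ∀ (n : ℕ) (K : Submodule R (Fin n → R)), K.FG →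
    ∀ (f : K →ₗ[R] A) (g : (Fin n → R) →ₗ[R] B),
      (∀ x : K, g x = i (f x)) →
      ∃ h : (Fin n → R) →ₗ[R] A, ∀ x : K, h x = f x

/-- `A` is absolutely pure: every map into `A` from a finitely generated submodule of a finite
free module extends to the free module. -/
def IsAbsolutelyPure (R : Type u) [Ring R] (A : Type v) [AddCommGroup A] [Module R A] : Prop :=
  ∀ (n : ℕ) (K : Submodule R (Fin n → R)), K.FG →
    ∀ f : K →ₗ[R] A, ∃ g : (Fin n → R) →ₗ[R] A, ∀ x : K, g x = f x

section Aux

variable {R : Type u} [Ring R]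

open Submodule

lemma exists_idem_span (hreg : ∀ a : R, ∃ x : R, a * x * a = a) (a : R) :
    ∃ x : R, (x * a) * (x * a) = x * a ∧
      Submodule.span R {a} = Submodule.span R {x * a} := by
  obtain ⟨x, hx⟩ := hreg a
  refine ⟨x, ?_, ?_⟩
  · calc (x * a) * (x * a) = x * (a * x * a) := by noncomm_ring
    _ = x * a := by rw [hx]
  · apply le_antisymm
    · rw [Submodule.span_le, Set.singleton_subset_iff]
      refine Submodule.mem_span_singleton.mpr ⟨a, ?_⟩
      simp only [smul_eq_mul]
      calc a * (x * a) = a * x * a := by noncomm_ring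
      _ = a := hx
    · rw [Submodule.span_le, Set.singleton_subset_iff]
      exact Submodule.smul_mem _ x (Submodule.mem_span_singleton_self a)

lemma mem_span_pair {a b y : R} (h : ∃ r s : R, r * a + s * b = y) :
    y ∈ Submodule.span R {a} ⊔ Submodule.span R {b} := by
  obtain ⟨r, s, rfl⟩ := h
  exact Submodule.add_mem _
    (Submodule.mem_sup_left (Submodule.smul_mem _ r (Submodule.mem_span_singleton_self a)))
    (Submodule.mem_sup_right (Submodule.smul_mem _ s (Submodule.mem_span_singleton_self b)))

lemma sup_span_singleton (hreg : ∀ a : R, ∃ x : R, a * x * a = a) (a b : R) :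
    ∃ c : R, Submodule.span R {a} ⊔ Submodule.span R {b} = Submodule.span R {c} := by
  obtain ⟨x, he, hsa⟩ := exists_idem_span hreg a
  set e := x * a with he_def
  set h := b - b * e with hh_def
  have step1 : Submodule.span R {a} ⊔ Submodule.span R {b}
      = Submodule.span R {e} ⊔ Submodule.span R {h} := by
    rw [hsa]
    apply le_antisymm
    · refine sup_le ?_ ?_
      · exact le_sup_left
      · rw [Submodule.span_le, Set.singleton_subset_iff]
        exact mem_span_pair ⟨b, 1, by rw [hh_def, one_mul]; abel⟩
    · refine sup_le ?_ ?_
      · exact le_sup_left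
      · rw [Submodule.span_le, Set.singleton_subset_iff]
        exact mem_span_pair ⟨-b, 1, by rw [hh_def, one_mul, neg_mul]; abel⟩
  have hhe : h * e = 0 := by
    rw [hh_def]
    calc (b - b * e) * e = b * e - b * (e * e) := by noncomm_ring
    _ = 0 := by rw [he, sub_self]
  obtain ⟨y, hh'idem, hsh⟩ := exists_idem_span hreg h
  set f := y * h with hf_def
  have hfe : f * e = 0 := by
    rw [hf_def, mul_assoc, hhe, mul_zero]
  set g := e + f - e * f with hg_def
  have heg : e * g = e := by
    rw [hg_def]
    calc e * (e + f - e * f) = e * e + e * f - (e * e) * f := by noncomm_ring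
    _ = e := by rw [he, add_sub_cancel_right]
  have hfg : f * g = f := by
    rw [hg_def]
    calc f * (e + f - e * f) = f * e + f * f - (f * e) * f := by noncomm_ring
    _ = f := by rw [hfe, hh'idem, zero_mul, sub_zero, zero_add]
  refine ⟨g, ?_⟩
  rw [step1, hsh]
  apply le_antisymm
  · refine sup_le ?_ ?_
    · rw [Submodule.span_le, Set.singleton_subset_iff]
      refine Submodule.mem_span_singleton.mpr ⟨e, ?_⟩
      simp only [smul_eq_mul, heg]
    · rw [Submodule.span_le, Set.singleton_subset_iff]
      refine Submodule.mem_span_singleton.mpr ⟨f, ?_⟩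
      simp only [smul_eq_mul, hfg]
  · rw [Submodule.span_le, Set.singleton_subset_iff]
    exact mem_span_pair ⟨1, 1 - e, by rw [hg_def, one_mul, sub_mul, one_mul]; abel⟩

lemma fg_span_idem (hreg : ∀ a : R, ∃ x : R, a * x * a = a)
    (L : Submodule R R) (hfg : L.FG) :
    ∃ e : R, e * e = e ∧ L = Submodule.span R {e} := by
  obtain ⟨s, rfl⟩ := hfg
  classical
  induction s using Finset.induction_on with
  | empty =>
    exact ⟨0, by rw [mul_zero], by rw [Finset.coe_empty, Submodule.span_empty, Submodule.span_zero_singleton]⟩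
  | @insert a s _ ih =>
    obtain ⟨e, _, hse⟩ := ih
    have hin : Submodule.span R (↑(insert a s) : Set R)
        = Submodule.span R {a} ⊔ Submodule.span R {e} := by
      rw [Finset.coe_insert, Submodule.span_insert, hse]
    obtain ⟨c, hc⟩ := sup_span_singleton hreg a e
    obtain ⟨x, hxc, hsc⟩ := exists_idem_span hreg c
    exact ⟨x * c, hxc, by rw [hin, hc, hsc]⟩

end Aux

theorem vonNeumannRegular_iff_all_absolutelySelfPure (R : Type u) [Ring R] :
    (∀ a : R, ∃ x : R, a * x * a = a) ↔
      (∀ (A : Type u) [AddCommGroup A] [Module R A], AbsolutelySelfPure R A) := by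
  constructor
  · intro hreg A _ _ L hfg f _hmem
    obtain ⟨e, he, rfl⟩ := fg_span_idem hreg L hfg
    have hem : e ∈ Submodule.span R {e} := Submodule.mem_span_singleton_self e
    refine ⟨f.comp (LinearMap.toSpanSingleton R _ ⟨e, hem⟩), ?_⟩
    intro x
    have hx : (x : R) • (⟨e, hem⟩ : Submodule.span R {e}) = x := by
      ext
      obtain ⟨r, hr⟩ := Submodule.mem_span_singleton.mp x.2
      simp only [SetLike.val_smul, smul_eq_mul] at hr ⊢
      calc (x : R) * e = r * e * e := by rw [hr]
      _ = r * (e * e) := by rw [mul_assoc]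
      _ = (x : R) := by rw [he, hr]
    simp only [LinearMap.comp_apply, LinearMap.toSpanSingleton_apply, hx]
  · intro hall a
    set L := Submodule.span R {a} with hL
    have ha : a ∈ L := Submodule.mem_span_singleton_self a
    have hfg : L.FG := ⟨{a}, by simp [hL]⟩
    set f : L →ₗ[R] (R × L) := LinearMap.prod 0 LinearMap.id with hf
    have hmem : MemOmegaBar R (R × L) ((LinearMap.ker f).map L.subtype) := by
      refine ⟨{((1 : R), (0 : L))}, ?_⟩
      intro r hr
      simp only [Finset.mem_coe, Finset.iInf_insert, Finset.mem_singleton,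
        iInf_iInf_eq_left, Submodule.mem_iInf] at hr
      have hr' : r ∈ annihilatorOf R ((1 : R), (0 : L)) := by
        simpa using hr
      have : r • ((1 : R), (0 : L)) = 0 := hr'
      have hr0 : r = 0 := by
        have := congrArg Prod.fst this
        simpa using this
      rw [hr0]
      exact Submodule.zero_mem _
    obtain ⟨h, hh⟩ := hall (R × L) L hfg f hmem
    have key : h a = ((0 : R), (⟨a, ha⟩ : L)) := by
      have := hh ⟨a, ha⟩
      simpa [hf] using this
    have key2 : h a = a • h 1 := by
      calc h a = h (a • (1 : R)) := by rw [smul_eq_mul, mul_one]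
      _ = a • h 1 := by rw [map_smul]
    obtain ⟨x, hx⟩ := Submodule.mem_span_singleton.mp (h 1).2.2
    have hva : a * ((h 1).2 : R) = a := by
      have h2 : (a • h 1).2 = (⟨a, ha⟩ : L) := by rw [← key2, key]
      have : ((a • h 1).2 : R) = a := by rw [h2]
      simpa [smul_eq_mul] using this
    refine ⟨x, ?_⟩
    have : ((h 1).2 : R) = x * a := by rw [← hx]; simp [smul_eq_mul]
    rw [mul_assoc, ← this, hva]
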